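/- For each n ≥ 1 there exists a first-order formula φ_n(x) in the language of boolean algebras with exactly two variables x and y such that in any finite boolean algebra, φ_n(x) holds of an element a if and only if a is above at least n atoms. Consequently, for each k there is a two-variable sentence true exactly in those finite boolean algebras with exactly k atoms. -/

import Mathlib

/-- Terms in the language of boolean algebras (0, 1, +, −) over the two
variables `x = var 0`, `y = var 1`. -/
inductive BATerm where
  | var : Fin 2 → BATerm
  | zero : BATerm
  | one : BATerm
  | sup : BATerm → BATerm → BATerm
  | compl : BATerm → BATerm

def BATerm.eval {α : Type*} [BooleanAlgebra α] (v : Fin 2 → α) : BATerm → α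
  | .var i => v i
  | .zero => ⊥
  | .one => ⊤
  | .sup t s => t.eval v ⊔ s.eval v
  | .compl t => (t.eval v)ᶜ

/-- First-order formulas in the language of boolean algebras using only the two
variables `x = var 0` and `y = var 1` (which may be requantified). -/
inductive BAForm where
  | eq : BATerm → BATerm → BAForm
  | not : BAForm → BAForm
  | and : BAForm → BAForm → BAForm
  | ex : Fin 2 → BAForm → BAForm

def BAForm.Realize {α : Type*} [BooleanAlgebra α] : BAForm → (Fin 2 → α) → Prop
  | .eq t s, v => t.eval v = s.eval v
  | .not f, v => ¬ f.Realize v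
  | .and f g, v => f.Realize v ∧ g.Realize v
  | .ex i f, v => ∃ a : α, f.Realize (Function.update v i a)

lemma count_one_iff {α : Type} [BooleanAlgebra α] [Fintype α] (a : α) :
    1 ≤ {b : α | IsAtom b ∧ b ≤ a}.ncard ↔ a ≠ ⊥ := by
  rw [Nat.one_le_iff_ne_zero, ← Nat.pos_iff_ne_zero, Set.ncard_pos (Set.toFinite _)]
  constructor
  · rintro ⟨b, hb, hba⟩ rfl
    exact hb.1 (le_bot_iff.mp hba)
  · intro ha
    rcases (eq_bot_or_exists_atom_le a).resolve_left ha with ⟨b, hb, hba⟩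
    exact ⟨b, hb, hba⟩

lemma count_succ_iff {α : Type} [BooleanAlgebra α] [Fintype α] (a : α) (n : ℕ) :
    n + 1 ≤ {b : α | IsAtom b ∧ b ≤ a}.ncard ↔
      ∃ c < a, n ≤ {b : α | IsAtom b ∧ b ≤ c}.ncard := by
  constructor
  · intro h
    have hne : ({b : α | IsAtom b ∧ b ≤ a}).Nonempty := by
      rw [← Set.ncard_pos (Set.toFinite _)]; omega
    obtain ⟨c, hc, hca⟩ := hne
    refine ⟨a ⊓ cᶜ, ?_, ?_⟩
    · refine lt_of_le_of_ne inf_le_left fun he => hc.1 ?_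
      have hcc : c ≤ cᶜ := hca.trans (he ▸ inf_le_right)
      simpa using (le_compl_iff_disjoint_right.mp hcc).le_bot
    · have hsub : {b : α | IsAtom b ∧ b ≤ a} \ {c} ⊆ {b : α | IsAtom b ∧ b ≤ a ⊓ cᶜ} := by
        rintro d ⟨⟨hd, hda⟩, hdc⟩
        exact ⟨hd, le_inf hda (le_compl_iff_disjoint_right.mpr (hd.disjoint_of_ne hc hdc))⟩
      have h1 := Set.ncard_le_ncard hsub (Set.toFinite _)
      have hcm : c ∈ {b : α | IsAtom b ∧ b ≤ a} := ⟨hc, hca⟩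
      have h2 := Set.ncard_diff_singleton_of_mem hcm
      omega
  · rintro ⟨c, hc, hn⟩
    have hbot : a ⊓ cᶜ ≠ ⊥ := by
      intro he
      have : a ≤ c := by
        have := le_compl_iff_disjoint_right.mpr (disjoint_iff.mpr he)
        simpa using this
      exact absurd (le_antisymm this hc.le) hc.ne'
    obtain ⟨d, hd, hdle⟩ := (eq_bot_or_exists_atom_le (a ⊓ cᶜ)).resolve_left hbot
    have hdnc : d ∉ {b : α | IsAtom b ∧ b ≤ c} := by
      rintro ⟨-, hdc⟩
      have hdb : d ≤ c ⊓ cᶜ := le_inf hdc (hdle.trans inf_le_right)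
      rw [inf_compl_eq_bot] at hdb
      exact hd.1 (le_bot_iff.mp hdb)
    have hsub : insert d {b : α | IsAtom b ∧ b ≤ c} ⊆ {b : α | IsAtom b ∧ b ≤ a} := by
      rintro e he
      rcases he with rfl | ⟨he, hec⟩
      · exact ⟨hd, hdle.trans inf_le_left⟩
      · exact ⟨he, hec.trans hc.le⟩
    have h1 := Set.ncard_le_ncard hsub (Set.toFinite _)
    rw [Set.ncard_insert_of_notMem hdnc (Set.toFinite _)] at h1
    omega

/-- The two-variable formula expressing "var i is above at least n atoms". -/
def phiAux : ℕ → Fin 2 → BAForm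
  | 0, _ => .eq .zero .zero
  | n + 1, i =>
    .ex (i + 1) (.and (.eq (.sup (.var (i + 1)) (.var i)) (.var i))
      (.and (.not (.eq (.var (i + 1)) (.var i))) (phiAux n (i + 1))))

lemma fin2_succ_ne (i : Fin 2) : i + 1 ≠ i := by fin_cases i <;> decide

lemma phiAux_realize (n : ℕ) (i : Fin 2) {α : Type} [BooleanAlgebra α] [Fintype α]
    (v : Fin 2 → α) :
    (phiAux n i).Realize v ↔ n ≤ {b : α | IsAtom b ∧ b ≤ v i}.ncard := by
  induction n generalizing i v with
  | zero => simp [phiAux, BAForm.Realize, BATerm.eval]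
  | succ n ih =>
    rw [count_succ_iff]
    simp only [phiAux, BAForm.Realize, BATerm.eval,
      Function.update_self, Function.update_of_ne (fin2_succ_ne i).symm, ih]
    constructor
    · rintro ⟨a, h1, h2, h3⟩
      exact ⟨a, lt_of_le_of_ne (sup_eq_right.mp h1) h2, h3⟩
    · rintro ⟨a, h1, h3⟩
      exact ⟨a, sup_eq_right.mpr h1.le, h1.ne, h3⟩

/-- For each `n ≥ 1` there is a two-variable formula `φ_n(x)` (free variable
`x = var 0`) holding of an element `a` of any finite boolean algebra iff `a` is
above at least `n` atoms; consequently for each `k` there is a two-variable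
sentence true exactly in the finite boolean algebras with exactly `k` atoms. -/
theorem two_variable_atom_counting :
    (∀ n : ℕ, 1 ≤ n → ∃ φ : BAForm,
      ∀ (α : Type) (_ : BooleanAlgebra α) (_ : Fintype α) (v : Fin 2 → α),
        φ.Realize v ↔ n ≤ {a : α | IsAtom a ∧ a ≤ v 0}.ncard) ∧
    (∀ k : ℕ, ∃ ψ : BAForm,
      ∀ (α : Type) (_ : BooleanAlgebra α) (_ : Fintype α) (v : Fin 2 → α),
        ψ.Realize v ↔ {a : α | IsAtom a}.ncard = k) := by
  constructor
  · intro n _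
    exact ⟨phiAux n 0, fun α _ _ v => phiAux_realize n 0 v⟩
  · intro k
    let E : ℕ → BAForm := fun m => .ex 0 (.and (.eq (.var 0) .one) (phiAux m 0))
    refine ⟨.and (E k) (.not (E (k + 1))), ?_⟩
    intro α _ _ v
    have key : ∀ m : ℕ, (E m).Realize v ↔ m ≤ {a : α | IsAtom a}.ncard := by
      intro m
      simp only [E, BAForm.Realize, BATerm.eval, Function.update_self, phiAux_realize]
      constructor
      · rintro ⟨a, rfl, h⟩
        simpa using h
      · intro h
        exact ⟨⊤, rfl, by simpa using h⟩
    rw [show (BAForm.and (E k) (.not (E (k + 1)))).Realize v ↔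
        ((E k).Realize v ∧ ¬ (E (k + 1)).Realize v) from Iff.rfl, key k, key (k + 1)]
    omega
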